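/- Quasi-free orthogonality of the Fock basis: with λ_∅∅ defined by inclusion-exclusion from λ_∅ (subtracting means), the inner products satisfy ⟨λ_∅∅(x_1,...,x_n), λ_∅∅(y_1,...,y_m)⟩ = δ_{n,m} Σ_{π∈S_n} Π_{i=1}^n ω(x_i* y_{π(i)}). In particular, Gram positivity holds: the matrix [Σ_{π∈S_n} Π_i ω(x_i^{(a)*} x_{π(i)}^{(b)})]_{a,b} is positive semidefinite whenever [ω(x*y)] defines a positive semidefinite kernel, since the permanent-type form is the inner product on the n-fold symmetric tensor power of the GNS Hilbert space. -/

import Mathlib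

open scoped ComplexOrder

variable {N : Type*} [Ring N] [StarRing N] [Algebra ℂ N]

/-- The combinatorial inner product of `λ_∅`-vectors (pairing formula). -/
noncomputable def lamEmptyIP (ω : N →ₗ[ℂ] ℂ) {ι κ : Type*}
    [Fintype ι] [Fintype κ] [DecidableEq ι] [DecidableEq κ]
    (x : ι → N) (y : κ → N) : ℂ :=
  ∑ s : Finset ι, ∑ t : Finset κ,
    if s.card = t.card then
      (∑ e : {i // i ∈ s} ≃ {j // j ∈ t}, ∏ i : {i // i ∈ s}, ω (star (x i.1) * y (e i).1))
        * (∏ i ∈ sᶜ, ω (star (x i))) * (∏ j ∈ tᶜ, ω (y j))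
    else 0

/-- The inner product of the Fock-basis (`λ_∅∅`-) vectors, obtained from the `λ_∅`
inner product by the inclusion–exclusion definition
`λ_∅∅(x_1,…,x_n) = ∑_{A⊆[n]} ∏_{i∈A}(-ω(x_i)) · λ_∅({x_i : i ∉ A})`
and sesquilinearity. -/
noncomputable def lamEEIP (ω : N →ₗ[ℂ] ℂ) {n m : ℕ} (x : Fin n → N) (y : Fin m → N) : ℂ :=
  ∑ A : Finset (Fin n), ∑ B : Finset (Fin m),
    (∏ i ∈ A, starRingEnd ℂ (-ω (x i))) * (∏ j ∈ B, (-ω (y j)))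
      * lamEmptyIP ω (fun i : {i // i ∈ Aᶜ} => x i.1) (fun j : {j // j ∈ Bᶜ} => y j.1)

open Finset Matrix


/-- quadratic-form positivity from a PSD matrix -/
lemma qform_nonneg {I : Type*} [Fintype I] {M : Matrix I I ℂ} (h : M.PosSemidef)
    (x : I → ℂ) : 0 ≤ ∑ a : I, ∑ b : I, starRingEnd ℂ (x a) * x b * M a b := by
  have := h.dotProduct_mulVec_nonneg x
  rw [dotProduct, ] at this
  convert this using 2 with a
  rw [Matrix.mulVec, dotProduct, Finset.mul_sum]
  congr 1 with b
  simp only [Pi.star_apply, Complex.star_def]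
  ring

lemma hadamard_psd {I : Type*} [Fintype I] [DecidableEq I] {M1 M2 : Matrix I I ℂ}
    (h1 : M1.PosSemidef) (h2 : M2.PosSemidef) :
    (Matrix.of fun a b => M1 a b * M2 a b).PosSemidef := by
  exact Matrix.PosSemidef.hadamard h1 h2
lemma prod_kernel_psd {I : Type*} [Fintype I] [DecidableEq I] {J : Type*}
    (s : Finset J) (K : J → Matrix I I ℂ) (h : ∀ j, (K j).PosSemidef) :
    (Matrix.of fun a b => ∏ j ∈ s, K j a b).PosSemidef := by
  induction s using Finset.cons_induction with
  | empty =>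
      simp only [Finset.prod_empty]
      have : (Matrix.of fun (_ _ : I) => (1 : ℂ))
          = (Matrix.of fun (_ : Unit) (_ : I) => (1 : ℂ))ᴴ
            * (Matrix.of fun (_ : Unit) (_ : I) => (1 : ℂ)) := by
        ext a b
        simp [Matrix.mul_apply]
      rw [this]
      exact Matrix.posSemidef_conjTranspose_mul_self _
  | cons j s hj ih =>
      simp only [Finset.prod_cons]
      exact hadamard_psd (h j) ih

lemma gram_psd (ω : N →ₗ[ℂ] ℂ)
    (hstar : ∀ a : N, ω (star a) = starRingEnd ℂ (ω a))
    (hPSD : ∀ (k : ℕ) (z : Fin k → N) (c : Fin k → ℂ),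
      0 ≤ ∑ a : Fin k, ∑ b : Fin k, starRingEnd ℂ (c a) * c b * ω (star (z a) * z b))
    {I : Type*} [Fintype I] [DecidableEq I] (z : I → N) :
    (Matrix.of fun a b => ω (star (z a) * z b)).PosSemidef := by
  refine Matrix.PosSemidef.of_dotProduct_mulVec_nonneg ?_ ?_
  · ext a b
    simp only [Matrix.conjTranspose_apply, Matrix.of_apply]
    rw [show (star (ω (star (z b) * z a)) : ℂ) = starRingEnd ℂ (ω (star (z b) * z a)) from rfl,
      ← hstar, StarMul.star_mul, star_star]
  · intro x
    have key : (∑ a : I, ∑ b : I, starRingEnd ℂ (x a) * x b * ω (star (z a) * z b))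
        = star x ⬝ᵥ (Matrix.of fun a b => ω (star (z a) * z b)) *ᵥ x := by
      rw [dotProduct]
      congr 1 with a
      rw [Matrix.mulVec, dotProduct, Finset.mul_sum]
      congr 1 with b
      simp only [Pi.star_apply, Complex.star_def, Matrix.of_apply]
      ring
    rw [← key]
    let e := (Fintype.equivFin I).symm
    have h2 := hPSD (Fintype.card I) (z ∘ e) (x ∘ e)
    refine le_of_le_of_eq h2 ?_
    exact Fintype.sum_equiv e _ _ fun a => Fintype.sum_equiv e _ _ fun b => by simp
lemma perm_double_sum {n : ℕ} (f : Fin n → Fin n → ℂ) :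
    ∑ σ : Equiv.Perm (Fin n), ∑ τ : Equiv.Perm (Fin n), ∏ i : Fin n, f (σ i) (τ i)
      = (n.factorial : ℂ) * ∑ π : Equiv.Perm (Fin n), ∏ i : Fin n, f i (π i) := by
  have step : ∀ σ : Equiv.Perm (Fin n),
      (∑ τ : Equiv.Perm (Fin n), ∏ i : Fin n, f (σ i) (τ i))
        = ∑ π : Equiv.Perm (Fin n), ∏ i : Fin n, f i (π i) := by
    intro σ
    have h1 : ∀ τ : Equiv.Perm (Fin n),
        (∏ i : Fin n, f (σ i) (τ i)) = ∏ j : Fin n, f j ((τ * σ⁻¹) j) := by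
      intro τ
      rw [← Equiv.prod_comp σ (fun j => f j ((τ * σ⁻¹) j))]
      simp [Equiv.Perm.mul_apply]
    simp only [h1]
    exact Equiv.sum_comp (Equiv.mulRight σ⁻¹) (fun π => ∏ j : Fin n, f j (π j))
  simp only [step, Finset.sum_const, Finset.card_univ, Fintype.card_perm, nsmul_eq_mul, Fintype.card_fin]

lemma part2 (ω : N →ₗ[ℂ] ℂ)
    (hstar : ∀ a : N, ω (star a) = starRingEnd ℂ (ω a))
    (hPSD : ∀ (k : ℕ) (z : Fin k → N) (c : Fin k → ℂ),
      0 ≤ ∑ a : Fin k, ∑ b : Fin k, starRingEnd ℂ (c a) * c b * ω (star (z a) * z b))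
    (n k : ℕ) (v : Fin k → Fin n → N) (c : Fin k → ℂ) :
    0 ≤ ∑ a : Fin k, ∑ b : Fin k,
          starRingEnd ℂ (c a) * c b
            * ∑ π : Equiv.Perm (Fin n), ∏ i : Fin n, ω (star (v a i) * v b (π i)) := by
  classical
  have hP : (Matrix.of fun p q : Fin k × Equiv.Perm (Fin n) =>
      ∏ i : Fin n, ω (star (v p.1 (p.2 i)) * v q.1 (q.2 i))).PosSemidef := by
    have := prod_kernel_psd (I := Fin k × Equiv.Perm (Fin n)) (Finset.univ : Finset (Fin n))
      (fun i => Matrix.of fun p q : Fin k × Equiv.Perm (Fin n) => ω (star (v p.1 (p.2 i)) * v q.1 (q.2 i)))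
      (fun i => gram_psd ω hstar hPSD (fun p : Fin k × Equiv.Perm (Fin n) => v p.1 (p.2 i)))
    exact this
  have hBig := qform_nonneg hP (fun p : Fin k × Equiv.Perm (Fin n) => c p.1)
  have key : (∑ p : Fin k × Equiv.Perm (Fin n), ∑ q : Fin k × Equiv.Perm (Fin n), starRingEnd ℂ (c p.1) * c q.1
        * (Matrix.of fun p q : Fin k × Equiv.Perm (Fin n) =>
            ∏ i : Fin n, ω (star (v p.1 (p.2 i)) * v q.1 (q.2 i))) p q)
      = (n.factorial : ℂ) * ∑ a : Fin k, ∑ b : Fin k,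
          starRingEnd ℂ (c a) * c b
            * ∑ π : Equiv.Perm (Fin n), ∏ i : Fin n, ω (star (v a i) * v b (π i)) := by
    simp only [Matrix.of_apply, Fintype.sum_prod_type]
    rw [show (∑ a : Fin k, ∑ σ : Equiv.Perm (Fin n), ∑ b : Fin k, ∑ τ : Equiv.Perm (Fin n),
        starRingEnd ℂ (c a) * c b * ∏ i : Fin n, ω (star (v a (σ i)) * v b (τ i)))
      = ∑ a : Fin k, ∑ b : Fin k, ∑ σ : Equiv.Perm (Fin n), ∑ τ : Equiv.Perm (Fin n),
        starRingEnd ℂ (c a) * c b * ∏ i : Fin n, ω (star (v a (σ i)) * v b (τ i))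
      from Finset.sum_congr rfl fun a _ => Finset.sum_comm]
    rw [Finset.mul_sum]
    refine Finset.sum_congr rfl fun a _ => ?_
    rw [Finset.mul_sum]
    refine Finset.sum_congr rfl fun b _ => ?_
    simp only [← Finset.mul_sum]
    rw [perm_double_sum (fun i j => ω (star (v a i) * v b j))]
    ring
  rw [key] at hBig
  have hinv : (0:ℂ) ≤ ((n.factorial : ℂ))⁻¹ := by
    have : ((n.factorial : ℂ))⁻¹ = (((n.factorial : ℝ))⁻¹ : ℝ) := by push_cast; ring
    rw [this]
    exact_mod_cast Complex.zero_le_real.mpr (by positivity)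
  have := mul_nonneg hinv hBig
  rwa [← mul_assoc, inv_mul_cancel₀ (by exact_mod_cast n.factorial_ne_zero), one_mul] at this


lemma sum_finset_subtype {ι : Type*} [Fintype ι] [DecidableEq ι] (A : Finset ι)
    (g : Finset {i // i ∈ A} → ℂ) :
    ∑ s : Finset {i // i ∈ A}, g s = ∑ S ∈ A.powerset, g (S.subtype (· ∈ A)) := by
  refine (Finset.sum_bij' (fun S _ => S.subtype (· ∈ A))
    (fun s _ => s.map (Function.Embedding.subtype _)) ?_ ?_ ?_ ?_ ?_).symm
  · intro S hS; exact Finset.mem_univ _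
  · intro s hs
    simp only [Finset.mem_powerset, Finset.subset_iff, Finset.mem_map,
      Function.Embedding.coe_subtype]
    rintro i ⟨⟨j, hj⟩, -, rfl⟩; exact hj
  · intro S hS
    rw [Finset.subtype_map, Finset.filter_true_of_mem]
    intro i hi; exact Finset.mem_powerset.mp hS hi
  · intro s hs
    ext ⟨i, hi⟩
    simp [Finset.mem_subtype, Finset.mem_map, Function.Embedding.coe_subtype]
    constructor
    · rintro ⟨x, h⟩; exact h
    · intro h; exact ⟨hi, h⟩
  · intros; rfl

noncomputable def Eterm (ω : N →ₗ[ℂ] ℂ) {ι κ : Type*} [DecidableEq ι] [DecidableEq κ]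
    (x : ι → N) (y : κ → N) (S : Finset ι) (T : Finset κ) : ℂ :=
  ∑ e : {i // i ∈ S} ≃ {j // j ∈ T}, ∏ i : {i // i ∈ S}, ω (star (x i.1) * y (e i).1)

def subsubEquiv {ι : Type*} [DecidableEq ι] {A : Finset ι} (S : Finset ι) (hS : S ⊆ A) :
    {a : {i // i ∈ A} // a ∈ S.subtype (· ∈ A)} ≃ {i // i ∈ S} where
  toFun a := ⟨a.1.1, Finset.mem_subtype.mp a.2⟩
  invFun i := ⟨⟨i.1, hS i.2⟩, by simpa using i.2⟩
  left_inv a := by ext; rfl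
  right_inv i := rfl

lemma compl_prod_eq {ι : Type*} [Fintype ι] [DecidableEq ι] {A S : Finset ι} (hS : S ⊆ A)
    (f : ι → ℂ) :
    (∏ i ∈ (S.subtype (· ∈ A))ᶜ, f i.1) = ∏ i ∈ A \ S, f i := by
  have h1 : (S.subtype (· ∈ A))ᶜ = (A \ S).subtype (· ∈ A) := by
    ext ⟨i, hi⟩
    simp [Finset.mem_subtype, hi]
  rw [h1]
  refine Finset.prod_bij (fun a _ => a.1) ?_ ?_ ?_ ?_
  · intro a ha; simpa using ha
  · intro a ha b hb h; exact Subtype.ext h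
  · intro b hb; exact ⟨⟨b, (Finset.mem_sdiff.mp hb).1⟩, by simpa using hb, rfl⟩
  · intros; rfl

lemma lamEmptyIP_powerset (ω : N →ₗ[ℂ] ℂ) {ι κ : Type*}
    [Fintype ι] [Fintype κ] [DecidableEq ι] [DecidableEq κ]
    (x : ι → N) (y : κ → N) (A : Finset ι) (B : Finset κ) :
    lamEmptyIP ω (fun i : {i // i ∈ Aᶜ} => x i.1) (fun j : {j // j ∈ Bᶜ} => y j.1)
      = ∑ S ∈ (Aᶜ).powerset, ∑ T ∈ (Bᶜ).powerset,
          if S.card = T.card then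
            Eterm ω x y S T * (∏ i ∈ Aᶜ \ S, ω (star (x i))) * (∏ j ∈ Bᶜ \ T, ω (y j))
          else 0 := by
  unfold lamEmptyIP
  rw [sum_finset_subtype]
  refine Finset.sum_congr rfl fun S hS => ?_
  rw [sum_finset_subtype]
  refine Finset.sum_congr rfl fun T hT => ?_
  have hS' : S ⊆ Aᶜ := Finset.mem_powerset.mp hS
  have hT' : T ⊆ Bᶜ := Finset.mem_powerset.mp hT
  have hcS : (S.subtype (· ∈ Aᶜ)).card = S.card := by
    rw [Finset.card_subtype, Finset.filter_true_of_mem fun i hi => hS' hi]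
  have hcT : (T.subtype (· ∈ Bᶜ)).card = T.card := by
    rw [Finset.card_subtype, Finset.filter_true_of_mem fun j hj => hT' hj]
  beta_reduce
  rw [hcS, hcT, compl_prod_eq hS' (fun i => ω (star (x i))), compl_prod_eq hT' (fun j => ω (y j))]
  have hE : (∑ e : {i // i ∈ S.subtype (· ∈ Aᶜ)} ≃ {j // j ∈ T.subtype (· ∈ Bᶜ)},
      ∏ i : {i // i ∈ S.subtype (· ∈ Aᶜ)}, ω (star (x i.1.1) * y ((e i).1.1)))
      = Eterm ω x y S T := by
    unfold Eterm
    refine Fintype.sum_equiv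
      (Equiv.equivCongr (subsubEquiv S hS') (subsubEquiv T hT')) _ _ fun e => ?_
    refine Fintype.prod_equiv (subsubEquiv S hS') _ _ fun i => ?_
    simp [subsubEquiv, Equiv.equivCongr]
  rw [hE]
lemma prod_zero_ite {ι : Type*} [DecidableEq ι] (U : Finset ι) :
    (∏ _i ∈ U, (0:ℂ)) = if U = ∅ then 1 else 0 := by
  rcases U.eq_empty_or_nonempty with h | h
  · simp [h]
  · rw [if_neg h.ne_empty, Finset.prod_const, zero_pow (by simpa using h.ne_empty)]

lemma sdiff_compl_comm' {ι : Type*} [Fintype ι] [DecidableEq ι] (A S : Finset ι) :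
    Aᶜ \ S = Sᶜ \ A := by
  ext i; simp [and_comm]

lemma inner_factor (ω : N →ₗ[ℂ] ℂ)
    (hstar : ∀ a : N, ω (star a) = starRingEnd ℂ (ω a))
    {ι κ : Type*} [Fintype ι] [Fintype κ] [DecidableEq ι] [DecidableEq κ]
    (x : ι → N) (y : κ → N) (S : Finset ι) (T : Finset κ) :
    (∑ B ∈ Tᶜ.powerset, ∑ A ∈ Sᶜ.powerset,
        (∏ i ∈ A, starRingEnd ℂ (-ω (x i))) * (∏ j ∈ B, (-ω (y j)))
          * (if S.card = T.card then
              Eterm ω x y S T * (∏ i ∈ Aᶜ \ S, ω (star (x i))) * (∏ j ∈ Bᶜ \ T, ω (y j))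
            else 0))
      = if S = Finset.univ ∧ T = Finset.univ then
          (if S.card = T.card then Eterm ω x y S T else 0) else 0 := by
  by_cases hc : S.card = T.card
  · simp only [if_pos hc]
    have step1 : ∀ B ∈ Tᶜ.powerset, ∀ A ∈ Sᶜ.powerset,
        (∏ i ∈ A, starRingEnd ℂ (-ω (x i))) * (∏ j ∈ B, (-ω (y j)))
          * (Eterm ω x y S T * (∏ i ∈ Aᶜ \ S, ω (star (x i))) * (∏ j ∈ Bᶜ \ T, ω (y j)))
        = Eterm ω x y S T
            * (((∏ j ∈ B, (-ω (y j))) * ∏ j ∈ Tᶜ \ B, ω (y j))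
              * ((∏ i ∈ A, starRingEnd ℂ (-ω (x i))) * ∏ i ∈ Sᶜ \ A, ω (star (x i)))) := by
      intro B _ A _
      rw [sdiff_compl_comm' A S, sdiff_compl_comm' B T]
      ring
    rw [Finset.sum_congr rfl fun B hB => Finset.sum_congr rfl (step1 B hB)]
    rw [Finset.sum_congr rfl fun B _ => (Finset.mul_sum _ _ _).symm, ← Finset.mul_sum,
      ← Finset.sum_mul_sum]
    have hX : (∑ A ∈ Sᶜ.powerset,
        (∏ i ∈ A, starRingEnd ℂ (-ω (x i))) * ∏ i ∈ Sᶜ \ A, ω (star (x i)))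
        = if S = Finset.univ then 1 else 0 := by
      rw [← Finset.prod_add]
      have : ∀ i, starRingEnd ℂ (-ω (x i)) + ω (star (x i)) = 0 := by
        intro i; rw [hstar, map_neg, neg_add_cancel]
      rw [Finset.prod_congr rfl fun i _ => this i, prod_zero_ite]
      simp only [Finset.compl_eq_empty_iff]
    have hY : (∑ B ∈ Tᶜ.powerset,
        (∏ j ∈ B, (-ω (y j))) * ∏ j ∈ Tᶜ \ B, ω (y j))
        = if T = Finset.univ then 1 else 0 := by
      rw [← Finset.prod_add]
      have : ∀ j, -ω (y j) + ω (y j) = 0 := fun j => neg_add_cancel _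
      rw [Finset.prod_congr rfl fun j _ => this j, prod_zero_ite]
      simp only [Finset.compl_eq_empty_iff]
    rw [hX, hY]
    by_cases hS : S = Finset.univ <;> by_cases hT : T = Finset.univ <;>
      simp [hS, hT]
  · simp [hc]
lemma Eterm_univ (ω : N →ₗ[ℂ] ℂ) {n : ℕ} (x y : Fin n → N) :
    Eterm ω x y (Finset.univ : Finset (Fin n)) (Finset.univ : Finset (Fin n))
      = ∑ π : Equiv.Perm (Fin n), ∏ i : Fin n, ω (star (x i) * y (π i)) := by
  unfold Eterm
  refine Fintype.sum_equiv
    (Equiv.equivCongr (Equiv.subtypeUnivEquiv fun i => Finset.mem_univ i)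
      (Equiv.subtypeUnivEquiv fun i => Finset.mem_univ i)) _ _ fun e => ?_
  refine Fintype.prod_equiv (Equiv.subtypeUnivEquiv fun i => Finset.mem_univ i) _ _ fun i => ?_
  simp [Equiv.equivCongr, Equiv.subtypeUnivEquiv]

theorem part1 (ω : N →ₗ[ℂ] ℂ)
    (hstar : ∀ a : N, ω (star a) = starRingEnd ℂ (ω a))
    (n m : ℕ) (x : Fin n → N) (y : Fin m → N) :
    lamEEIP ω x y
      = if h : n = m then
          ∑ π : Equiv.Perm (Fin n), ∏ i : Fin n, ω (star (x i) * y (Fin.cast h (π i)))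
        else 0 := by
  unfold lamEEIP
  calc
    (∑ A : Finset (Fin n), ∑ B : Finset (Fin m),
        (∏ i ∈ A, starRingEnd ℂ (-ω (x i))) * (∏ j ∈ B, (-ω (y j)))
          * lamEmptyIP ω (fun i : {i // i ∈ Aᶜ} => x i.1) (fun j : {j // j ∈ Bᶜ} => y j.1))
      = ∑ A : Finset (Fin n), ∑ B : Finset (Fin m), ∑ S ∈ (Aᶜ).powerset, ∑ T ∈ (Bᶜ).powerset,
          (∏ i ∈ A, starRingEnd ℂ (-ω (x i))) * (∏ j ∈ B, (-ω (y j)))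
            * (if S.card = T.card then
                Eterm ω x y S T * (∏ i ∈ Aᶜ \ S, ω (star (x i))) * (∏ j ∈ Bᶜ \ T, ω (y j))
              else 0) := by
        refine Finset.sum_congr rfl fun A _ => Finset.sum_congr rfl fun B _ => ?_
        rw [lamEmptyIP_powerset ω x y A B, Finset.mul_sum]
        exact Finset.sum_congr rfl fun S _ => Finset.mul_sum _ _ _
    _ = ∑ A : Finset (Fin n), ∑ S ∈ (Aᶜ).powerset, ∑ B : Finset (Fin m), ∑ T ∈ (Bᶜ).powerset,
          (∏ i ∈ A, starRingEnd ℂ (-ω (x i))) * (∏ j ∈ B, (-ω (y j)))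
            * (if S.card = T.card then
                Eterm ω x y S T * (∏ i ∈ Aᶜ \ S, ω (star (x i))) * (∏ j ∈ Bᶜ \ T, ω (y j))
              else 0) := Finset.sum_congr rfl fun A _ => Finset.sum_comm
    _ = ∑ S : Finset (Fin n), ∑ A ∈ (Sᶜ).powerset, ∑ B : Finset (Fin m), ∑ T ∈ (Bᶜ).powerset,
          (∏ i ∈ A, starRingEnd ℂ (-ω (x i))) * (∏ j ∈ B, (-ω (y j)))
            * (if S.card = T.card then
                Eterm ω x y S T * (∏ i ∈ Aᶜ \ S, ω (star (x i))) * (∏ j ∈ Bᶜ \ T, ω (y j))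
              else 0) := Finset.sum_comm' (by
          intro a b
          simp only [Finset.mem_univ, Finset.mem_powerset, true_and, and_true]
          exact Finset.subset_compl_comm)
    _ = ∑ S : Finset (Fin n), ∑ B : Finset (Fin m), ∑ T ∈ (Bᶜ).powerset, ∑ A ∈ (Sᶜ).powerset,
          (∏ i ∈ A, starRingEnd ℂ (-ω (x i))) * (∏ j ∈ B, (-ω (y j)))
            * (if S.card = T.card then
                Eterm ω x y S T * (∏ i ∈ Aᶜ \ S, ω (star (x i))) * (∏ j ∈ Bᶜ \ T, ω (y j))
              else 0) := Finset.sum_congr rfl fun S _ =>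
          Finset.sum_comm.trans (Finset.sum_congr rfl fun B _ => Finset.sum_comm)
    _ = ∑ S : Finset (Fin n), ∑ T : Finset (Fin m), ∑ B ∈ (Tᶜ).powerset, ∑ A ∈ (Sᶜ).powerset,
          (∏ i ∈ A, starRingEnd ℂ (-ω (x i))) * (∏ j ∈ B, (-ω (y j)))
            * (if S.card = T.card then
                Eterm ω x y S T * (∏ i ∈ Aᶜ \ S, ω (star (x i))) * (∏ j ∈ Bᶜ \ T, ω (y j))
              else 0) := Finset.sum_congr rfl fun S _ => Finset.sum_comm' (by
          intro a b
          simp only [Finset.mem_univ, Finset.mem_powerset, true_and, and_true]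
          exact Finset.subset_compl_comm)
    _ = ∑ S : Finset (Fin n), ∑ T : Finset (Fin m),
          (if S = Finset.univ ∧ T = Finset.univ then
            (if S.card = T.card then Eterm ω x y S T else 0) else 0) := by
        exact Finset.sum_congr rfl fun S _ => Finset.sum_congr rfl fun T _ =>
          inner_factor ω hstar x y S T
    _ = (if (Finset.univ : Finset (Fin n)).card = (Finset.univ : Finset (Fin m)).card then
          Eterm ω x y Finset.univ Finset.univ else 0) := by
        rw [Finset.sum_eq_single_of_mem Finset.univ (Finset.mem_univ _)
          (fun S _ hS => by
            rw [Finset.sum_eq_zero]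
            intro T _
            rw [if_neg (by simp [hS])])]
        rw [Finset.sum_eq_single_of_mem Finset.univ (Finset.mem_univ _)
          (fun T _ hT => by rw [if_neg (by simp [hT])])]
        rw [if_pos ⟨rfl, rfl⟩]
    _ = _ := by
        by_cases h : n = m
        · subst h
          rw [dif_pos rfl, if_pos rfl, Eterm_univ]
          simp
        · rw [dif_neg h, if_neg (by simpa using h)]

/-- **Quasi-free orthogonality of the Fock basis and Gram positivity**:
`⟨λ_∅∅(x_1,…,x_n), λ_∅∅(y_1,…,y_m)⟩ = δ_{n,m} ∑_{π∈S_n} ∏_i ω(x_i* y_{π(i)})`; and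
whenever `[ω(x*y)]` is a positive semidefinite kernel, the permanent-type Gram matrix
`[∑_{π∈S_n} ∏_i ω(x_i^{(a)*} x_{π(i)}^{(b)})]_{a,b}` is positive semidefinite (it is the
Gram matrix in the `n`-fold symmetric tensor power of the GNS space). -/
theorem lamEE_quasi_free (ω : N →ₗ[ℂ] ℂ)
    (hstar : ∀ a : N, ω (star a) = starRingEnd ℂ (ω a))
    (hPSD : ∀ (k : ℕ) (z : Fin k → N) (c : Fin k → ℂ),
      0 ≤ ∑ a : Fin k, ∑ b : Fin k, starRingEnd ℂ (c a) * c b * ω (star (z a) * z b)) :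
    (∀ (n m : ℕ) (x : Fin n → N) (y : Fin m → N),
      lamEEIP ω x y
        = if h : n = m then
            ∑ π : Equiv.Perm (Fin n), ∏ i : Fin n, ω (star (x i) * y (Fin.cast h (π i)))
          else 0) ∧
    ∀ (n k : ℕ) (v : Fin k → Fin n → N) (c : Fin k → ℂ),
      0 ≤ ∑ a : Fin k, ∑ b : Fin k,
            starRingEnd ℂ (c a) * c b
              * ∑ π : Equiv.Perm (Fin n), ∏ i : Fin n, ω (star (v a i) * v b (π i)) := by
  constructor
  · exact fun n m x y => part1 ω hstar n m x y
  · exact fun n k v c => part2 ω hstar hPSD n k v c
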